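/- Let (T, s) be a signed triangulation of a convex polygon with associated proper 4-colouring of the vertices, and let x be a vertex of the polygon. If no two neighbours of x have the same colour, then x has degree 2 or 3 and the weight p(x) is nonzero mod 3. -/

import Mathlib

namespace PolyFlip


/-- Two vertices of the convex `N`-gon are consecutive along the boundary. -/
def BdryAdj (N : ℕ) (i j : Fin N) : Prop :=
  (i.val + 1) % N = j.val ∨ (j.val + 1) % N = i.val

/-- `d` is a diagonal of the convex `N`-gon: an unordered pair of distinct,
non-consecutive vertices. -/
def IsDiag (N : ℕ) (d : Finset (Fin N)) : Prop :=
  ∃ i j : Fin N, i ≠ j ∧ ¬ BdryAdj N i j ∧ d = {i, j}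

/-- The chord `d` crosses the chord `e` (in this orientation): the endpoints
interlace in the cyclic (here: linear) order of the polygon's vertices. -/
def Crosses {N : ℕ} (d e : Finset (Fin N)) : Prop :=
  ∃ a b c f : Fin N, d = {a, b} ∧ e = {c, f} ∧ a < c ∧ c < b ∧ b < f

/-- A triangulation of the convex `N`-gon: a maximal set of pairwise
non-crossing diagonals. -/
structure Triangulation (N : ℕ) where
  diags : Finset (Finset (Fin N))
  isDiag : ∀ d ∈ diags, IsDiag N d
  noncross : ∀ d ∈ diags, ∀ e ∈ diags, ¬ Crosses d e
  maximal : ∀ d, IsDiag N d → (∀ e ∈ diags, ¬ Crosses d e ∧ ¬ Crosses e d) → d ∈ diags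

/-- `a` and `b` are joined by an edge of the triangulated polygon:
either a boundary edge, or a diagonal of the triangulation. -/
def IsEdge {N : ℕ} (T : Triangulation N) (a b : Fin N) : Prop :=
  a ≠ b ∧ (BdryAdj N a b ∨ ({a, b} : Finset (Fin N)) ∈ T.diags)

/-- `t` is a triangle (face) of the triangulation `T`. -/
def IsTriangle {N : ℕ} (T : Triangulation N) (t : Finset (Fin N)) : Prop :=
  ∃ a b c : Fin N, a ≠ b ∧ a ≠ c ∧ b ≠ c ∧ t = {a, b, c} ∧
    IsEdge T a b ∧ IsEdge T a c ∧ IsEdge T b c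

/-- A coloured triangulation: a triangulation together with a colour in
`Fin m` for each of its triangles. -/
structure ColouredTri (N m : ℕ) where
  T : Triangulation N
  col : {t : Finset (Fin N) // IsTriangle T t} → Fin m

/-- The degree of a vertex `x` in the triangulated polygon. -/
noncomputable def degree {N : ℕ} (T : Triangulation N) (x : Fin N) : ℕ :=
  Nat.card {y : Fin N // IsEdge T x y}

/-- The `σ`-flip at the diagonal `d`: `d = {a,b}` is a diagonal of `C` whose two
incident triangles `{a,b,x}` and `{a,b,y}` have the same colour `i`; it is replaced by
the other diagonal `{x,y}` of the quadrilateral, the two new triangles `{a,x,y}` and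
`{b,x,y}` get colour `σ i`, and all other triangles keep their colours. -/
def SFlipAt {N m : ℕ} (σ : Equiv.Perm (Fin m)) (d : Finset (Fin N))
    (C C' : ColouredTri N m) : Prop :=
  ∃ (a b x y : Fin N) (h₁ : IsTriangle C.T {a, b, x}) (h₂ : IsTriangle C.T {a, b, y})
    (h₁' : IsTriangle C'.T {a, x, y}) (h₂' : IsTriangle C'.T {b, x, y}),
    d = {a, b} ∧ d ∈ C.T.diags ∧ x ≠ y ∧
    C.col ⟨{a, b, x}, h₁⟩ = C.col ⟨{a, b, y}, h₂⟩ ∧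
    C'.T.diags = insert {x, y} (C.T.diags.erase d) ∧
    C'.col ⟨{a, x, y}, h₁'⟩ = σ (C.col ⟨{a, b, x}, h₁⟩) ∧
    C'.col ⟨{b, x, y}, h₂'⟩ = σ (C.col ⟨{a, b, x}, h₁⟩) ∧
    ∀ (t : Finset (Fin N)) (ht : IsTriangle C.T t) (ht' : IsTriangle C'.T t),
      t ≠ {a, b, x} → t ≠ {a, b, y} → C'.col ⟨t, ht'⟩ = C.col ⟨t, ht⟩

/-- The `σ`-flip relation. -/
def SFlip {N m : ℕ} (σ : Equiv.Perm (Fin m)) (C C' : ColouredTri N m) : Prop :=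
  ∃ d, SFlipAt σ d C C'

/-- The 2-coloured flip at a diagonal (the colour permutation swaps the two colours). -/
abbrev Flip2At {N : ℕ} (d : Finset (Fin N)) (C C' : ColouredTri N 2) : Prop :=
  SFlipAt (finRotate 2) d C C'

/-- The 2-coloured flip relation. -/
abbrev Flip2 {N : ℕ} (C C' : ColouredTri N 2) : Prop :=
  SFlip (finRotate 2) C C'

/-- The 2-coloured flip graph of the convex `N`-gon: vertices are the 2-coloured
triangulations, edges are single 2-coloured flips. -/
def flipGraph (N : ℕ) : SimpleGraph (ColouredTri N 2) where
  Adj C C' := C ≠ C' ∧ (Flip2 C C' ∨ Flip2 C' C)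
  symm := ⟨fun C C' h => ⟨h.1.symm, h.2.symm⟩⟩
  loopless := ⟨fun C h => h.1 rfl⟩

/-- The sign (`+1` for colour `0`, `-1` for colour `1`) of a colour, in `ZMod 3`. -/
def signVal (c : Fin 2) : ZMod 3 := if c = 0 then 1 else -1

/-- The weight of a vertex `x`: the sum, modulo 3, of the signs of all triangles
incident with `x`. -/
noncomputable def weight {N : ℕ} (C : ColouredTri N 2) (x : Fin N) : ZMod 3 :=
  ∑ᶠ t : {t : Finset (Fin N) // IsTriangle C.T t},
    if x ∈ t.val then signVal (C.col t) else 0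

/-- The number of triangles coloured `+1` (colour `0`). -/
noncomputable def plusCount {N : ℕ} (C : ColouredTri N 2) : ℕ :=
  Nat.card {t : {t : Finset (Fin N) // IsTriangle C.T t} // C.col t = 0}

/-- Adjacency in the `k`-dimensional hypercube: the two vertices differ in
exactly one coordinate. -/
def cubeAdj (k : ℕ) (u v : Fin k → Bool) : Prop := ∃! i, u i ≠ v i

/-- The `k`-dimensional hypercube graph on `{0,1}^k`. -/
def cubeGraph (k : ℕ) : SimpleGraph (Fin k → Bool) where
  Adj := cubeAdj k
  symm := by
    constructor
    rintro u v ⟨i, hi, hu⟩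
    exact ⟨i, hi.symm, fun j hj => hu j hj.symm⟩
  loopless := by
    constructor
    rintro u ⟨i, hi, -⟩
    exact hi rfl

/-- `f` exhibits a `k`-dimensional hypercube inside the connected component of `C`
in the 2-coloured flip graph. -/
def CubeEmb {N : ℕ} (C : ColouredTri N 2) (k : ℕ)
    (f : (Fin k → Bool) → ColouredTri N 2) : Prop :=
  Function.Injective f ∧
  (∀ u v, cubeAdj k u v → (flipGraph N).Adj (f u) (f v)) ∧
  ∀ u, (flipGraph N).Reachable C (f u)

/-- `G` contains a subdivision (topological copy) of `H`: there are branch vertices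
`f w` for the vertices `w` of `H` and internally disjoint paths in `G` between them
realising the edges of `H`. -/
def ContainsSubdivision {V W : Type*} (G : SimpleGraph V) (H : SimpleGraph W) : Prop :=
  ∃ f : W → V, Function.Injective f ∧
    ∃ P : ∀ u v : W, H.Adj u v → G.Walk (f u) (f v),
      (∀ u v (h : H.Adj u v), (P u v h).IsPath) ∧
      (∀ u v (h : H.Adj u v) (w : W), f w ∈ (P u v h).support → w = u ∨ w = v) ∧
      (∀ u₁ v₁ (h₁ : H.Adj u₁ v₁) u₂ v₂ (h₂ : H.Adj u₂ v₂),
        (s(u₁, v₁) : Sym2 W) ≠ s(u₂, v₂) →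
        ∀ x, x ∈ (P u₁ v₁ h₁).support → x ∈ (P u₂ v₂ h₂).support →
          (x = f u₁ ∨ x = f v₁) ∧ (x = f u₂ ∨ x = f v₂))

/-- Planarity, via Kuratowski's characterisation: a graph is planar iff it contains
no subdivision of `K₅` and no subdivision of `K₃,₃`. -/
def IsPlanar {V : Type*} (G : SimpleGraph V) : Prop :=
  ¬ ContainsSubdivision G (SimpleGraph.completeGraph (Fin 5)) ∧
  ¬ ContainsSubdivision G (completeBipartiteGraph (Fin 3) (Fin 3))

/-- `col` is a proper 4-colouring of the vertices associated to the signed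
triangulation `C`: adjacent vertices get distinct colours, and in every
quadrilateral formed by two triangles sharing a diagonal, the two vertices not on
the diagonal have equal colours iff the two triangles have different signs. -/
def Compatible {N : ℕ} (C : ColouredTri N 2) (col : Fin N → Fin 4) : Prop :=
  (∀ a b : Fin N, IsEdge C.T a b → col a ≠ col b) ∧
  ∀ (a b x z : Fin N) (h₁ : IsTriangle C.T {a, b, x}) (h₂ : IsTriangle C.T {a, b, z}),
    x ≠ z → ({a, b} : Finset (Fin N)) ∈ C.T.diags →
    (col x = col z ↔ C.col ⟨{a, b, x}, h₁⟩ ≠ C.col ⟨{a, b, z}, h₂⟩)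


/-! ### Auxiliary machinery -/

section Aux

variable {n : ℕ}

/-- successor vertex on the boundary -/
def nxt (x : Fin (n+3)) : Fin (n+3) := ⟨(x.val + 1) % (n+3), Nat.mod_lt _ (by omega)⟩

/-- predecessor vertex on the boundary -/
def prv (x : Fin (n+3)) : Fin (n+3) := ⟨(x.val + (n+2)) % (n+3), Nat.mod_lt _ (by omega)⟩

lemma nxt_spec (x : Fin (n+3)) :
    ((nxt x).val = x.val + 1 ∧ x.val + 1 < n+3) ∨ ((nxt x).val = 0 ∧ x.val = n+2) := by
  have hx := x.isLt
  rcases Nat.lt_or_ge (x.val + 1) (n+3) with h | h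
  · exact Or.inl ⟨Nat.mod_eq_of_lt h, h⟩
  · have : x.val = n + 2 := by omega
    right; refine ⟨?_, this⟩
    simp [nxt, this]

lemma prv_spec (x : Fin (n+3)) :
    ((prv x).val = x.val - 1 ∧ 0 < x.val) ∨ ((prv x).val = n+2 ∧ x.val = 0) := by
  have hx := x.isLt
  rcases Nat.eq_zero_or_pos x.val with h | h
  · right; refine ⟨?_, h⟩
    show (x.val + (n+2)) % (n+3) = n+2
    rw [h, Nat.zero_add]; exact Nat.mod_eq_of_lt (by omega)
  · left; refine ⟨?_, h⟩
    show (x.val + (n+2)) % (n+3) = x.val - 1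
    have h1 : x.val + (n+2) = (x.val - 1) + (n+3) := by omega
    rw [h1, Nat.add_mod_right]
    exact Nat.mod_eq_of_lt (by omega)

lemma bdry_nxt (x : Fin (n+3)) : BdryAdj (n+3) x (nxt x) := Or.inl rfl

lemma bdry_prv (x : Fin (n+3)) : BdryAdj (n+3) x (prv x) := by
  right
  rcases prv_spec x with ⟨h1, h2⟩ | ⟨h1, h2⟩
  · rw [h1]
    have : x.val - 1 + 1 = x.val := by omega
    rw [this]; exact Nat.mod_eq_of_lt x.isLt
  · rw [h1, h2]; simp

lemma nxt_ne (x : Fin (n+3)) : nxt x ≠ x := by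
  rcases nxt_spec x with ⟨h1, _⟩ | ⟨h1, h2⟩ <;> (intro h; rw [Fin.ext_iff] at h; omega)

lemma prv_ne (x : Fin (n+3)) : prv x ≠ x := by
  rcases prv_spec x with ⟨h1, h2⟩ | ⟨h1, h2⟩ <;> (intro h; rw [Fin.ext_iff] at h; omega)

lemma nxt_ne_prv (x : Fin (n+3)) : nxt x ≠ prv x := by
  rcases nxt_spec x with ⟨h1, h2⟩ | ⟨h1, h2⟩ <;>
    rcases prv_spec x with ⟨h3, h4⟩ | ⟨h3, h4⟩ <;>
      (intro h; rw [Fin.ext_iff] at h; omega)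

lemma bdry_iff (x y : Fin (n+3)) : BdryAdj (n+3) x y ↔ y = nxt x ∨ y = prv x := by
  constructor
  · rintro (h | h)
    · left; rw [Fin.ext_iff]; exact h.symm
    · right; rw [Fin.ext_iff]
      rcases prv_spec x with ⟨h1, h2⟩ | ⟨h1, h2⟩ <;>
        · have hy := y.isLt
          rcases Nat.lt_or_ge (y.val+1) (n+3) with h5 | h5
          · rw [Nat.mod_eq_of_lt h5] at h; omega
          · have h6 : y.val = n+2 := by omega
            rw [h6] at h; simp at h; omega
  · rintro (rfl | rfl)
    · exact bdry_nxt x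
    · exact bdry_prv x

lemma bdry_symm {N : ℕ} {x y : Fin N} (h : BdryAdj N x y) : BdryAdj N y x := h.symm

lemma pair_eq {N : ℕ} {a b c d : Fin N} (h : ({a,b} : Finset (Fin N)) = {c,d}) :
    (a = c ∧ b = d) ∨ (a = d ∧ b = c) := by
  rw [Finset.Subset.antisymm_iff] at h
  simp only [Finset.insert_subset_iff, Finset.singleton_subset_iff, Finset.mem_insert,
    Finset.mem_singleton] at h
  simp only [Fin.ext_iff] at h ⊢
  omega

/-- linear interlacing of the chords `{a,b}` and `{c,d}`, at value level:
all four points distinct and exactly one of `c`, `d` lies strictly between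
`a` and `b`. -/
def IlaceN (a b c d : ℕ) : Prop :=
  a ≠ b ∧ c ≠ d ∧ c ≠ a ∧ c ≠ b ∧ d ≠ a ∧ d ≠ b ∧
    (((a < c ∧ c < b) ∨ (b < c ∧ c < a)) ↔ ((d < a ∧ d < b) ∨ (a < d ∧ b < d)))

lemma ilace_of_crosses {N : ℕ} {d e : Finset (Fin N)} {a b c f : Fin N}
    (h : Crosses d e ∨ Crosses e d) (hd : d = {a,b}) (he : e = {c,f}) :
    IlaceN a.val b.val c.val f.val := by
  rcases h with ⟨a',b',c',f', hd', he', h1, h2, h3⟩ | ⟨a',b',c',f', he', hd', h1, h2, h3⟩ <;>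
  · rw [hd] at hd'; rw [he] at he'
    rcases pair_eq hd' with ⟨u1,u2⟩ | ⟨u1,u2⟩ <;> rcases pair_eq he' with ⟨v1,v2⟩ | ⟨v1,v2⟩ <;>
      simp only [Fin.ext_iff] at u1 u2 v1 v2 <;>
      simp only [Fin.lt_def] at h1 h2 h3 <;>
      unfold IlaceN <;> omega

lemma crosses_mk {N : ℕ} {a b c f : Fin N} (h1 : a < c) (h2 : c < b) (h3 : b < f) :
    Crosses ({a,b} : Finset (Fin N)) {c,f} := ⟨a,b,c,f, rfl, rfl, h1, h2, h3⟩

lemma crosses_or_of_ilace {N : ℕ} {a b c f : Fin N}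
    (h : IlaceN a.val b.val c.val f.val) :
    Crosses ({a,b} : Finset (Fin N)) {c,f} ∨ Crosses ({c,f} : Finset (Fin N)) {a,b} := by
  obtain ⟨hab, hcf, h1, h2, h3, h4, hiff⟩ := h
  have lt : ∀ {u v : Fin N}, u.val < v.val → u < v := fun h => Fin.lt_def.mpr h
  by_cases hc : (a.val < c.val ∧ c.val < b.val) ∨ (b.val < c.val ∧ c.val < a.val)
  · have hd := hiff.mp hc
    rcases Nat.lt_or_ge a.val b.val with hab' | hab'
    · rcases hd with hd | hd
      · -- f < a < c < b
        refine Or.inr ?_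
        rw [Finset.pair_comm c f]
        exact crosses_mk (lt (by omega)) (lt (by omega)) (lt (by omega))
      · -- a < c < b < f
        exact Or.inl (crosses_mk (lt (by omega)) (lt (by omega)) (lt (by omega)))
    · rcases hd with hd | hd
      · -- f < b < c < a
        refine Or.inr ?_
        rw [Finset.pair_comm c f, Finset.pair_comm a b]
        exact crosses_mk (lt (by omega)) (lt (by omega)) (lt (by omega))
      · -- b < c < a < f
        refine Or.inl ?_
        rw [Finset.pair_comm a b]
        exact crosses_mk (lt (by omega)) (lt (by omega)) (lt (by omega))
  · have hfn : ¬ ((f.val < a.val ∧ f.val < b.val) ∨ (a.val < f.val ∧ b.val < f.val)) :=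
      fun hout => hc (hiff.mpr hout)
    -- f lies strictly between a and b, c lies outside
    rcases Nat.lt_or_ge a.val b.val with hab' | hab'
    · rcases (show c.val < a.val ∨ b.val < c.val by omega) with hd | hd
      · -- c < a < f < b
        exact Or.inr (crosses_mk (lt (by omega)) (lt (by omega)) (lt (by omega)))
      · -- a < f < b < c
        refine Or.inl ?_
        rw [Finset.pair_comm c f]
        exact crosses_mk (lt (by omega)) (lt (by omega)) (lt (by omega))
    · rcases (show c.val < b.val ∨ a.val < c.val by omega) with hd | hd
      · -- c < b < f < a
        refine Or.inr ?_
        rw [Finset.pair_comm a b]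
        exact crosses_mk (lt (by omega)) (lt (by omega)) (lt (by omega))
      · -- b < f < a < c
        refine Or.inl ?_
        rw [Finset.pair_comm a b, Finset.pair_comm c f]
        exact crosses_mk (lt (by omega)) (lt (by omega)) (lt (by omega))

lemma IsEdge.symm' {N : ℕ} {T : Triangulation N} {a b : Fin N} (h : IsEdge T a b) :
    IsEdge T b a := by
  refine ⟨h.1.symm, h.2.imp bdry_symm ?_⟩
  intro hm; rwa [Finset.pair_comm]

lemma edge_nxt (T : Triangulation (n+3)) (x : Fin (n+3)) : IsEdge T x (nxt x) :=
  ⟨(nxt_ne x).symm, Or.inl (bdry_nxt x)⟩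

lemma edge_prv (T : Triangulation (n+3)) (x : Fin (n+3)) : IsEdge T x (prv x) :=
  ⟨(prv_ne x).symm, Or.inl (bdry_prv x)⟩

lemma edge_cases {T : Triangulation (n+3)} {x y : Fin (n+3)} (h : IsEdge T x y) :
    y = nxt x ∨ y = prv x ∨ (({x,y} : Finset (Fin (n+3))) ∈ T.diags ∧ ¬ BdryAdj (n+3) x y) := by
  rcases h.2 with hb | hd
  · rcases (bdry_iff x y).mp hb with h1 | h1
    · exact Or.inl h1
    · exact Or.inr (Or.inl h1)
  · refine Or.inr (Or.inr ⟨hd, ?_⟩)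
    obtain ⟨i, j, hij, hbij, hije⟩ := T.isDiag _ hd
    rcases pair_eq hije with ⟨rfl, rfl⟩ | ⟨rfl, rfl⟩
    · exact hbij
    · exact fun hb => hbij (bdry_symm hb)

lemma ilace_shared₁ {a b c : ℕ} (h : IlaceN a b c b) : False := by
  unfold IlaceN at h; omega

lemma ilace_shared₂ {a b c : ℕ} (h : IlaceN a b b c) : False := by
  unfold IlaceN at h; omega

lemma transfer_nxt_nat {n xv qv yv iv jv : ℕ}
    (hq : (qv = xv + 1 ∧ xv + 1 < n+3) ∨ (qv = 0 ∧ xv = n+2))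
    (hbx : xv < n+3) (hby : yv < n+3) (hbi : iv < n+3) (hbj : jv < n+3)
    (hi : iv ≠ xv) (hj : jv ≠ xv) (hxy : xv ≠ yv) (hqy : qv ≠ yv)
    (hIl : IlaceN qv yv iv jv) : IlaceN xv yv iv jv := by
  unfold IlaceN at hIl ⊢
  rcases hq with ⟨hq1, hq2⟩ | ⟨hq1, hq2⟩ <;> subst hq1 <;> omega

lemma transfer_prv_nat {n xv pv yv iv jv : ℕ}
    (hp : (pv = xv - 1 ∧ 0 < xv) ∨ (pv = n+2 ∧ xv = 0))
    (hbx : xv < n+3) (hby : yv < n+3) (hbi : iv < n+3) (hbj : jv < n+3)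
    (hi : iv ≠ xv) (hj : jv ≠ xv) (hxy : xv ≠ yv) (hpy : pv ≠ yv)
    (hIl : IlaceN pv yv iv jv) : IlaceN xv yv iv jv := by
  unfold IlaceN at hIl ⊢
  rcases hp with ⟨hp1, hp2⟩ | ⟨hp1, hp2⟩ <;> subst hp1 <;> omega

lemma ear_center_nat {n xv pv qv iv jv : ℕ}
    (hq : (qv = xv + 1 ∧ xv + 1 < n+3) ∨ (qv = 0 ∧ xv = n+2))
    (hp : (pv = xv - 1 ∧ 0 < xv) ∨ (pv = n+2 ∧ xv = 0))
    (hbx : xv < n+3) (hbi : iv < n+3) (hbj : jv < n+3)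
    (hIl : IlaceN pv qv iv jv) : iv = xv ∨ jv = xv := by
  unfold IlaceN at hIl
  rcases hq with ⟨hq1, hq2⟩ | ⟨hq1, hq2⟩ <;> subst hq1 <;>
    rcases hp with ⟨hp1, hp2⟩ | ⟨hp1, hp2⟩ <;> subst hp1 <;> omega

lemma not_ear_bdry_nat {n xv pv qv yv : ℕ}
    (hq : (qv = xv + 1 ∧ xv + 1 < n+3) ∨ (qv = 0 ∧ xv = n+2))
    (hp : (pv = xv - 1 ∧ 0 < xv) ∨ (pv = n+2 ∧ xv = 0))
    (h1 : yv ≠ xv) (h2 : yv ≠ qv) (h3 : yv ≠ pv)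
    (hbx : xv < n+3) (hby : yv < n+3)
    (hb : pv + 1 = qv ∨ (n+3 ≤ pv+1 ∧ pv+1-(n+3) = qv) ∨
      qv + 1 = pv ∨ (n+3 ≤ qv+1 ∧ qv+1-(n+3) = pv)) : False := by
  rcases hq with ⟨hq1, hq2⟩ | ⟨hq1, hq2⟩ <;> subst hq1 <;>
    rcases hp with ⟨hp1, hp2⟩ | ⟨hp1, hp2⟩ <;> subst hp1 <;> omega

lemma not_ear_ilace_nat {n xv pv qv yv : ℕ}
    (hq : (qv = xv + 1 ∧ xv + 1 < n+3) ∨ (qv = 0 ∧ xv = n+2))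
    (hp : (pv = xv - 1 ∧ 0 < xv) ∨ (pv = n+2 ∧ xv = 0))
    (h1 : yv ≠ xv) (h2 : yv ≠ qv) (h3 : yv ≠ pv)
    (hbx : xv < n+3) (hby : yv < n+3) : IlaceN pv qv xv yv := by
  unfold IlaceN
  rcases hq with ⟨hq1, hq2⟩ | ⟨hq1, hq2⟩ <;> subst hq1 <;>
    rcases hp with ⟨hp1, hp2⟩ | ⟨hp1, hp2⟩ <;> subst hp1 <;> omega


set_option maxHeartbeats 1600000 in
/-- If the only neighbours of `x` are its two boundary neighbours, they are joined
by an edge (the "ear" at `x`). -/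
lemma ear_edge (T : Triangulation (n+3)) (x : Fin (n+3))
    (hA : ∀ w, IsEdge T x w → w = nxt x ∨ w = prv x) :
    IsEdge T (prv x) (nxt x) := by
  refine ⟨(nxt_ne_prv x).symm, ?_⟩
  by_cases hb : BdryAdj (n+3) (prv x) (nxt x)
  · exact Or.inl hb
  right
  apply T.maximal _ ⟨prv x, nxt x, (nxt_ne_prv x).symm, hb, rfl⟩
  intro e he
  obtain ⟨i, j, hij, hbij, hije⟩ := T.isDiag e he
  have key : (Crosses ({prv x, nxt x} : Finset (Fin (n+3))) e ∨
      Crosses e ({prv x, nxt x} : Finset (Fin (n+3)))) → False := by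
    intro hcr
    have hIl : IlaceN (prv x).val (nxt x).val i.val j.val :=
      ilace_of_crosses hcr rfl hije
    have hix : i = x ∨ j = x := by
      rcases ear_center_nat (nxt_spec x) (prv_spec x) x.isLt i.isLt j.isLt hIl with h | h
      · exact Or.inl (Fin.ext h)
      · exact Or.inr (Fin.ext h)
    -- so e contains x; but then the other endpoint is a diagonal-neighbour of x
    rcases hix with rfl | rfl
    · have hedge : IsEdge T i j := ⟨hij, Or.inr (hije ▸ he)⟩
      exact hbij ((bdry_iff i j).mpr (hA j hedge))
    · have hedge : IsEdge T j i := ⟨hij.symm, Or.inr (by rwa [Finset.pair_comm, ← hije])⟩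
      exact hbij (bdry_symm ((bdry_iff j i).mpr (hA i hedge)))
  exact ⟨fun h => key (Or.inl h), fun h => key (Or.inr h)⟩

end Aux


section Deg3


variable {n : ℕ} {T : Triangulation (n+3)} {x y0 : Fin (n+3)}

lemma mod_cases (n a : ℕ) (h : a < 2*(n+3)) :
    (a % (n+3) = a ∧ a < n+3) ∨ (a % (n+3) = a - (n+3) ∧ n+3 ≤ a) := by
  rcases Nat.lt_or_ge a (n+3) with h1 | h1
  · exact Or.inl ⟨Nat.mod_eq_of_lt h1, h1⟩
  · right; refine ⟨?_, h1⟩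
    rw [Nat.mod_eq_sub_mod h1]
    exact Nat.mod_eq_of_lt (by omega)

variable (hy0d : ({x, y0} : Finset (Fin (n+3))) ∈ T.diags)
  (hyx : y0 ≠ x) (hyq : y0 ≠ nxt x) (hyp : y0 ≠ prv x)
  (hOnly : ∀ w, IsEdge T x w → w = nxt x ∨ w = prv x ∨ w = y0)

set_option maxHeartbeats 1600000 in
include hy0d hyx hyq hyp hOnly in
lemma deg3_edge_nxt : IsEdge T (nxt x) y0 := by
  refine ⟨hyq.symm, ?_⟩
  by_cases hb : BdryAdj (n+3) (nxt x) y0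
  · exact Or.inl hb
  right
  apply T.maximal _ ⟨nxt x, y0, hyq.symm, hb, rfl⟩
  intro e he
  obtain ⟨i, j, hij, hbij, hije⟩ := T.isDiag e he
  have key : (Crosses ({nxt x, y0} : Finset (Fin (n+3))) e ∨
      Crosses e ({nxt x, y0} : Finset (Fin (n+3)))) → False := by
    intro hcr
    have hIl : IlaceN (nxt x).val y0.val i.val j.val := ilace_of_crosses hcr rfl hije
    by_cases hi : i = x
    · subst hi
      have hedge : IsEdge T i j := ⟨hij, Or.inr (hije ▸ he)⟩
      rcases hOnly j hedge with h1 | h1 | h1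
      · exact hbij ((bdry_iff i j).mpr (Or.inl h1))
      · exact hbij ((bdry_iff i j).mpr (Or.inr h1))
      · subst h1; exact ilace_shared₁ hIl
    by_cases hj : j = x
    · subst hj
      have hedge : IsEdge T j i := ⟨hij.symm, Or.inr (by rw [Finset.pair_comm]; exact hije ▸ he)⟩
      rcases hOnly i hedge with h1 | h1 | h1
      · exact hbij (bdry_symm ((bdry_iff j i).mpr (Or.inl h1)))
      · exact hbij (bdry_symm ((bdry_iff j i).mpr (Or.inr h1)))
      · subst h1; exact ilace_shared₂ hIl
    have hIl2 : IlaceN x.val y0.val i.val j.val :=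
      transfer_nxt_nat (nxt_spec x) x.isLt y0.isLt i.isLt j.isLt
        (fun hc => hi (Fin.ext hc)) (fun hc => hj (Fin.ext hc))
        (fun hc => hyx (Fin.ext hc.symm)) (fun hc => hyq ((Fin.ext hc).symm)) hIl
    rcases crosses_or_of_ilace hIl2 with hc2 | hc2
    · exact absurd (show Crosses ({x, y0} : Finset (Fin (n+3))) e by
        rw [hije]; exact hc2) (T.noncross _ hy0d _ he)
    · exact absurd (show Crosses e ({x, y0} : Finset (Fin (n+3))) by
        rw [hije]; exact hc2) (T.noncross _ he _ hy0d)
  exact ⟨fun h => key (Or.inl h), fun h => key (Or.inr h)⟩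

set_option maxHeartbeats 1600000 in
include hy0d hyx hyq hyp hOnly in
lemma deg3_edge_prv : IsEdge T (prv x) y0 := by
  refine ⟨hyp.symm, ?_⟩
  by_cases hb : BdryAdj (n+3) (prv x) y0
  · exact Or.inl hb
  right
  apply T.maximal _ ⟨prv x, y0, hyp.symm, hb, rfl⟩
  intro e he
  obtain ⟨i, j, hij, hbij, hije⟩ := T.isDiag e he
  have key : (Crosses ({prv x, y0} : Finset (Fin (n+3))) e ∨
      Crosses e ({prv x, y0} : Finset (Fin (n+3)))) → False := by
    intro hcr
    have hIl : IlaceN (prv x).val y0.val i.val j.val := ilace_of_crosses hcr rfl hije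
    by_cases hi : i = x
    · subst hi
      have hedge : IsEdge T i j := ⟨hij, Or.inr (hije ▸ he)⟩
      rcases hOnly j hedge with h1 | h1 | h1
      · exact hbij ((bdry_iff i j).mpr (Or.inl h1))
      · exact hbij ((bdry_iff i j).mpr (Or.inr h1))
      · subst h1; exact ilace_shared₁ hIl
    by_cases hj : j = x
    · subst hj
      have hedge : IsEdge T j i := ⟨hij.symm, Or.inr (by rw [Finset.pair_comm]; exact hije ▸ he)⟩
      rcases hOnly i hedge with h1 | h1 | h1
      · exact hbij (bdry_symm ((bdry_iff j i).mpr (Or.inl h1)))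
      · exact hbij (bdry_symm ((bdry_iff j i).mpr (Or.inr h1)))
      · subst h1; exact ilace_shared₂ hIl
    have hIl2 : IlaceN x.val y0.val i.val j.val :=
      transfer_prv_nat (prv_spec x) x.isLt y0.isLt i.isLt j.isLt
        (fun hc => hi (Fin.ext hc)) (fun hc => hj (Fin.ext hc))
        (fun hc => hyx (Fin.ext hc.symm)) (fun hc => hyp ((Fin.ext hc).symm)) hIl
    rcases crosses_or_of_ilace hIl2 with hc2 | hc2
    · exact absurd (show Crosses ({x, y0} : Finset (Fin (n+3))) e by
        rw [hije]; exact hc2) (T.noncross _ hy0d _ he)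
    · exact absurd (show Crosses e ({x, y0} : Finset (Fin (n+3))) by
        rw [hije]; exact hc2) (T.noncross _ he _ hy0d)
  exact ⟨fun h => key (Or.inl h), fun h => key (Or.inr h)⟩

set_option maxHeartbeats 1600000 in
include hy0d hyx hyq hyp in
lemma deg3_not_ear : ¬ IsEdge T (prv x) (nxt x) := by
  have h1 : y0.val ≠ x.val := fun hc => hyx (Fin.ext hc)
  have h2 : y0.val ≠ (nxt x).val := fun hc => hyq (Fin.ext hc)
  have h3 : y0.val ≠ (prv x).val := fun hc => hyp (Fin.ext hc)
  rintro ⟨hne, hb | hd⟩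
  · -- boundary adjacency of prv and nxt is impossible when there are ≥ 4 vertices
    refine not_ear_bdry_nat (nxt_spec x) (prv_spec x) h1 h2 h3 x.isLt y0.isLt ?_
    rcases hb with hb | hb
    · rcases mod_cases n ((prv x).val + 1) (by have := (prv x).isLt; omega) with
        ⟨hm, hm'⟩ | ⟨hm, hm'⟩
      · rw [hm] at hb; exact Or.inl hb
      · rw [hm] at hb; exact Or.inr (Or.inl ⟨hm', hb⟩)
    · rcases mod_cases n ((nxt x).val + 1) (by have := (nxt x).isLt; omega) with
        ⟨hm, hm'⟩ | ⟨hm, hm'⟩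
      · rw [hm] at hb; exact Or.inr (Or.inr (Or.inl hb))
      · rw [hm] at hb; exact Or.inr (Or.inr (Or.inr ⟨hm', hb⟩))
  · -- the chord {prv x, nxt x} would cross the diagonal {x, y0}
    have hIl : IlaceN (prv x).val (nxt x).val x.val y0.val :=
      not_ear_ilace_nat (nxt_spec x) (prv_spec x) h1 h2 h3 x.isLt y0.isLt
    rcases crosses_or_of_ilace hIl with hc2 | hc2
    · exact T.noncross _ hd _ hy0d hc2
    · exact T.noncross _ hy0d _ hd hc2

end Deg3


section Tri

variable {n : ℕ} {T : Triangulation (n+3)} {x : Fin (n+3)}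

lemma tri_mk {u v : Fin (n+3)} (hxu : x ≠ u) (hxv : x ≠ v) (huv : u ≠ v)
    (e1 : IsEdge T x u) (e2 : IsEdge T x v) (e3 : IsEdge T u v) :
    IsTriangle T {x, u, v} := ⟨x, u, v, hxu, hxv, huv, rfl, e1, e2, e3⟩

lemma tri_containing {t : Finset (Fin (n+3))} (ht : IsTriangle T t) (hx : x ∈ t) :
    ∃ u v, u ≠ v ∧ IsEdge T x u ∧ IsEdge T x v ∧ IsEdge T u v ∧ t = {x, u, v} := by
  obtain ⟨a, b, c, hab, hac, hbc, rfl, e1, e2, e3⟩ := ht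
  simp only [Finset.mem_insert, Finset.mem_singleton] at hx
  rcases hx with rfl | rfl | rfl
  · exact ⟨b, c, hbc, e1, e2, e3, rfl⟩
  · refine ⟨a, c, hac, e1.symm', e3, e2, ?_⟩
    rw [Finset.insert_comm]
  · refine ⟨a, b, hab, e2.symm', e3.symm', e1, ?_⟩
    rw [Finset.pair_comm b x, Finset.insert_comm]

end Tri

/-- If no two neighbours of `x` have the same colour in the 4-colouring associated
to the signed triangulation, then `x` has degree 2 or 3 and its weight is nonzero. -/
theorem degree_and_weight_of_all_distinct_colours (n : ℕ)
    (C : ColouredTri (n + 3) 2) (col : Fin (n + 3) → Fin 4)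
    (hcomp : Compatible C col) (x : Fin (n + 3))
    (hnone : ∀ y z : Fin (n + 3), y ≠ z → IsEdge C.T x y → IsEdge C.T x z →
      col y ≠ col z) :
    (degree C.T x = 2 ∨ degree C.T x = 3) ∧ weight C x ≠ 0 := by
  classical
  obtain ⟨hcol1, hcol2⟩ := hcomp
  have hq := edge_nxt C.T x
  have hp := edge_prv C.T x
  have hdeg : degree C.T x = Set.ncard {y | IsEdge C.T x y} :=
    Nat.card_coe_set_eq _
  letI : Fintype {t : Finset (Fin (n+3)) // IsTriangle C.T t} := Fintype.ofFinite _
  have hw : weight C x = ∑ t : {t : Finset (Fin (n+3)) // IsTriangle C.T t},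
      if x ∈ t.val then signVal (C.col t) else 0 := finsum_eq_sum_of_fintype _
  by_cases hA : ∀ w, IsEdge C.T x w → w = nxt x ∨ w = prv x
  · -- degree 2 case
    have hear := ear_edge C.T x hA
    have ht0 : IsTriangle C.T {x, prv x, nxt x} :=
      tri_mk (prv_ne x).symm (nxt_ne x).symm (nxt_ne_prv x).symm hp hq hear
    have huniq : ∀ t, IsTriangle C.T t → x ∈ t → t = {x, prv x, nxt x} := by
      intro t ht hx
      obtain ⟨u, v, huv, e1, e2, e3, rfl⟩ := tri_containing ht hx
      rcases hA u e1 with hu | hu <;> rcases hA v e2 with hv | hv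
      · exact absurd (hu.trans hv.symm) huv
      · rw [hu, hv, Finset.pair_comm]
      · rw [hu, hv]
      · exact absurd (hu.trans hv.symm) huv
    have hset : {y | IsEdge C.T x y} = {prv x, nxt x} := by
      ext y
      simp only [Set.mem_setOf_eq, Set.mem_insert_iff, Set.mem_singleton_iff]
      constructor
      · intro h
        rcases hA y h with rfl | rfl
        · exact Or.inr rfl
        · exact Or.inl rfl
      · rintro (rfl | rfl)
        exacts [hp, hq]
    have hd2 : degree C.T x = 2 := by
      rw [hdeg, hset, Set.ncard_pair (nxt_ne_prv x).symm]
    refine ⟨Or.inl hd2, ?_⟩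
    have hite : ∀ (t : {t : Finset (Fin (n+3)) // IsTriangle C.T t}), x ∈ t.val →
        (if x ∈ t.val then signVal (C.col t) else 0) = signVal (C.col t) :=
      fun t h => if_pos h
    have hsum2 : ∑ t : {t : Finset (Fin (n+3)) // IsTriangle C.T t},
        (if x ∈ t.val then signVal (C.col t) else 0)
        = ∑ t ∈ ({⟨{x, prv x, nxt x}, ht0⟩} :
            Finset {t : Finset (Fin (n+3)) // IsTriangle C.T t}),
          (if x ∈ t.val then signVal (C.col t) else 0) := by
      refine (Finset.sum_subset (Finset.subset_univ _) ?_).symm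
      rintro ⟨t, ht⟩ - hnm
      by_cases hxt : x ∈ t
      · exfalso
        apply hnm
        simp only [Finset.mem_singleton]
        exact Subtype.ext (huniq t ht hxt)
      · exact if_neg hxt
    rw [hw, hsum2, Finset.sum_singleton,
      hite _ (show x ∈ ({x, prv x, nxt x} : Finset (Fin (n+3))) by simp)]
    exact (by decide : ∀ c : Fin 2, signVal c ≠ 0) _
  · -- degree 3 case
    push_neg at hA
    obtain ⟨y0, hy0e, hy0q, hy0p⟩ := hA
    have hy0x : y0 ≠ x := hy0e.1.symm
    have hy0d : ({x, y0} : Finset (Fin (n+3))) ∈ C.T.diags := by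
      rcases edge_cases hy0e with h | h | h
      · exact absurd h hy0q
      · exact absurd h hy0p
      · exact h.1
    have hOnly : ∀ w, IsEdge C.T x w → w = nxt x ∨ w = prv x ∨ w = y0 := by
      intro w hw'
      by_contra hc
      push_neg at hc
      obtain ⟨hw1, hw2, hw3⟩ := hc
      have m1 : col x ∉ ({col (nxt x), col (prv x), col y0, col w} : Finset (Fin 4)) := by
        simp only [Finset.mem_insert, Finset.mem_singleton]
        push_neg
        exact ⟨hcol1 _ _ hq, hcol1 _ _ hp, hcol1 _ _ hy0e, hcol1 _ _ hw'⟩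
      have m2 : col (nxt x) ∉ ({col (prv x), col y0, col w} : Finset (Fin 4)) := by
        simp only [Finset.mem_insert, Finset.mem_singleton]
        push_neg
        exact ⟨hnone _ _ (nxt_ne_prv x) hq hp, hnone _ _ (Ne.symm hy0q) hq hy0e,
          hnone _ _ (Ne.symm hw1) hq hw'⟩
      have m3 : col (prv x) ∉ ({col y0, col w} : Finset (Fin 4)) := by
        simp only [Finset.mem_insert, Finset.mem_singleton]
        push_neg
        exact ⟨hnone _ _ (Ne.symm hy0p) hp hy0e, hnone _ _ (Ne.symm hw2) hp hw'⟩
      have m4 : col y0 ≠ col w := hnone _ _ (Ne.symm hw3) hy0e hw'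
      have hS : ({col x, col (nxt x), col (prv x), col y0, col w} :
          Finset (Fin 4)).card ≤ 4 :=
        le_trans (Finset.card_le_univ _) (by simp)
      rw [Finset.card_insert_of_notMem m1, Finset.card_insert_of_notMem m2,
        Finset.card_insert_of_notMem m3, Finset.card_pair m4] at hS
      omega
    have heq : IsEdge C.T (nxt x) y0 := deg3_edge_nxt hy0d hy0x hy0q hy0p hOnly
    have hep : IsEdge C.T (prv x) y0 := deg3_edge_prv hy0d hy0x hy0q hy0p hOnly
    have hnotear : ¬ IsEdge C.T (prv x) (nxt x) := deg3_not_ear hy0d hy0x hy0q hy0p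
    have ht1 : IsTriangle C.T {x, nxt x, y0} :=
      tri_mk (nxt_ne x).symm hy0e.1 (Ne.symm hy0q) hq hy0e heq
    have ht2 : IsTriangle C.T {x, prv x, y0} :=
      tri_mk (prv_ne x).symm hy0e.1 (Ne.symm hy0p) hp hy0e hep
    have huniq : ∀ t, IsTriangle C.T t → x ∈ t →
        t = {x, nxt x, y0} ∨ t = {x, prv x, y0} := by
      intro t ht hx
      obtain ⟨u, v, huv, e1, e2, e3, rfl⟩ := tri_containing ht hx
      rcases hOnly u e1 with hu | hu | hu <;> rcases hOnly v e2 with hv | hv | hv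
      · exact absurd (hu.trans hv.symm) huv
      · rw [hu, hv] at e3; exact absurd e3.symm' hnotear
      · rw [hu, hv]; exact Or.inl rfl
      · rw [hu, hv] at e3; exact absurd e3 hnotear
      · exact absurd (hu.trans hv.symm) huv
      · rw [hu, hv]; exact Or.inr rfl
      · rw [hu, hv]; exact Or.inl (by rw [Finset.pair_comm y0 (nxt x)])
      · rw [hu, hv]; exact Or.inr (by rw [Finset.pair_comm y0 (prv x)])
      · exact absurd (hu.trans hv.symm) huv
    have hset : {y | IsEdge C.T x y} = {nxt x, prv x, y0} := by
      ext w
      simp only [Set.mem_setOf_eq, Set.mem_insert_iff, Set.mem_singleton_iff]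
      constructor
      · exact hOnly w
      · rintro (rfl | rfl | rfl)
        exacts [hq, hp, hy0e]
    have hd3 : degree C.T x = 3 := by
      rw [hdeg, hset]
      rw [Set.ncard_insert_of_notMem (by
        simp only [Set.mem_insert_iff, Set.mem_singleton_iff]
        push_neg
        exact ⟨nxt_ne_prv x, Ne.symm hy0q⟩)]
      rw [Set.ncard_pair (Ne.symm hy0p)]
    refine ⟨Or.inr hd3, ?_⟩
    have hkey : C.col ⟨{x, nxt x, y0}, ht1⟩ = C.col ⟨{x, prv x, y0}, ht2⟩ := by
      have eq1 : ({x, y0, nxt x} : Finset (Fin (n+3))) = {x, nxt x, y0} := by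
        rw [Finset.pair_comm y0 (nxt x)]
      have eq2 : ({x, y0, prv x} : Finset (Fin (n+3))) = {x, prv x, y0} := by
        rw [Finset.pair_comm y0 (prv x)]
      have ht1' : IsTriangle C.T {x, y0, nxt x} := by rw [eq1]; exact ht1
      have ht2' : IsTriangle C.T {x, y0, prv x} := by rw [eq2]; exact ht2
      have hiff := hcol2 x y0 (nxt x) (prv x) ht1' ht2' (nxt_ne_prv x) hy0d
      have hcolne : col (nxt x) ≠ col (prv x) := hnone _ _ (nxt_ne_prv x) hq hp
      have hcc : C.col ⟨{x, y0, nxt x}, ht1'⟩ = C.col ⟨{x, y0, prv x}, ht2'⟩ := by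
        by_contra hcc
        exact hcolne (hiff.mpr hcc)
      calc C.col ⟨{x, nxt x, y0}, ht1⟩
          = C.col ⟨{x, y0, nxt x}, ht1'⟩ := congrArg C.col (Subtype.ext eq1.symm)
        _ = C.col ⟨{x, y0, prv x}, ht2'⟩ := hcc
        _ = C.col ⟨{x, prv x, y0}, ht2⟩ := congrArg C.col (Subtype.ext eq2)
    have hne12 : ({x, nxt x, y0} : Finset (Fin (n+3))) ≠ {x, prv x, y0} := by
      intro hcontra
      have hmem : nxt x ∈ ({x, prv x, y0} : Finset (Fin (n+3))) := by
        rw [← hcontra]; simp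
      simp only [Finset.mem_insert, Finset.mem_singleton] at hmem
      rcases hmem with h | h | h
      · exact nxt_ne x h
      · exact nxt_ne_prv x h
      · exact hy0q h.symm
    have hsub : (⟨{x, nxt x, y0}, ht1⟩ : {t : Finset (Fin (n+3)) // IsTriangle C.T t})
        ≠ ⟨{x, prv x, y0}, ht2⟩ := fun hcon => hne12 (congrArg Subtype.val hcon)
    have hite : ∀ (t : {t : Finset (Fin (n+3)) // IsTriangle C.T t}), x ∈ t.val →
        (if x ∈ t.val then signVal (C.col t) else 0) = signVal (C.col t) :=
      fun t h => if_pos h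
    have hsum2 : ∑ t : {t : Finset (Fin (n+3)) // IsTriangle C.T t},
        (if x ∈ t.val then signVal (C.col t) else 0)
        = ∑ t ∈ ({⟨{x, nxt x, y0}, ht1⟩, ⟨{x, prv x, y0}, ht2⟩} :
            Finset {t : Finset (Fin (n+3)) // IsTriangle C.T t}),
          (if x ∈ t.val then signVal (C.col t) else 0) := by
      refine (Finset.sum_subset (Finset.subset_univ _) ?_).symm
      rintro ⟨t, ht⟩ - hnm
      by_cases hxt : x ∈ t
      · exfalso
        apply hnm
        simp only [Finset.mem_insert, Finset.mem_singleton]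
        rcases huniq t ht hxt with h | h
        · exact Or.inl (Subtype.ext h)
        · exact Or.inr (Subtype.ext h)
      · exact if_neg hxt
    rw [hw, hsum2, Finset.sum_pair hsub,
      hite _ (show x ∈ ({x, nxt x, y0} : Finset (Fin (n+3))) by simp),
      hite _ (show x ∈ ({x, prv x, y0} : Finset (Fin (n+3))) by simp), ← hkey]
    exact (by decide : ∀ c : Fin 2, signVal c + signVal c ≠ 0) _

end PolyFlip
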